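/- Assume the constrained potential game setup and Slater's condition with constants ξ_{i,m} > 0. There exists a constant c > 0, depending only on n, A_max, Φ_max, Φ_min, γ, d, G_max, and ξ_min := min_{i,m} ξ_{i,m}, with the following property. Let ε ∈ (0,1], let 0 < μ ≤ ε, let x̂ ∈ Δ^n, let λ̂ := argmax_{λ⪰0} L̃(x̂,λ), and suppose −min{ δᵀ∇_x L̃(x̂,λ̂) : x̂ + δ ∈ Δ^n, ‖δ‖₂ ≤ 1 } ≤ ε. Then x̂ is a (cε)-approximately feasible (cε)-approximate Nash equilibrium: (a) g_{i,m}(x̂_i) ≤ cε for every player i and every m ∈ {1,…,d_i}, and (b) for every player i and every x_i' ∈ Δ(A_i) satisfying g_{i,m}(x_i') ≤ ε for all m, one has Φ(x_i', x̂_{-i}) ≥ Φ(x̂) − cε. -/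

import Mathlib

open scoped BigOperators RealInnerProductSpace

noncomputable section

/-- The probability simplex `Δ(A_i) ⊆ ℝ^{|A_i|}` with the Euclidean norm. -/
def simplex (k : ℕ) : Set (EuclideanSpace ℝ (Fin k)) :=
  {x | (∀ j, 0 ≤ x j) ∧ ∑ j, x j = 1}

/-- The joint strategy space with the Euclidean (ℓ²) norm. -/
abbrev Strat (n : ℕ) (A : Fin n → ℕ) := PiLp 2 fun i => EuclideanSpace ℝ (Fin (A i))

/-- The product of simplices `Δ^n = Δ(A_1) × ⋯ × Δ(A_n)`. -/
def prodSimplex (n : ℕ) (A : Fin n → ℕ) : Set (Strat n A) :=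
  {x | ∀ i, x i ∈ simplex (A i)}

/-- The multilinear extension `Φ(x) = ∑_a φ(a) ∏_i x_i(a_i)` of `φ`. -/
def pot (n : ℕ) (A : Fin n → ℕ) (φ : (∀ i, Fin (A i)) → ℝ) (x : Strat n A) : ℝ :=
  ∑ a : ∀ i, Fin (A i), φ a * ∏ i, x i (a i)

/-! ### Auxiliary lemmas -/

lemma aux_sum_update {α : Type*} [Fintype α] [DecidableEq α] {β : α → Type*}
    (F : ∀ j, β j → ℝ) (f : ∀ j, β j) (i : α) (b : β i) :
    ∑ j, F j (Function.update f i b j)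
      = F i b + ∑ j ∈ Finset.univ.erase i, F j (f j) := by
  rw [← Finset.add_sum_erase _ (fun j => F j (Function.update f i b j)) (Finset.mem_univ i)]
  simp only [Function.update_self]
  congr 1
  exact Finset.sum_congr rfl fun j hj => by
    rw [Function.update_of_ne (Finset.ne_of_mem_erase hj)]

lemma aux_sum_split {α : Type*} [Fintype α] [DecidableEq α] (F : α → ℝ) (i : α) :
    ∑ j, F j = F i + ∑ j ∈ Finset.univ.erase i, F j :=
  (Finset.add_sum_erase _ F (Finset.mem_univ i)).symm

lemma quad_max {μ lam G : ℝ} (hμ : 0 < μ) (hlam : 0 ≤ lam)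
    (hq : ∀ s : ℝ, 0 ≤ s → s * G - μ * s ^ 2 ≤ lam * G - μ * lam ^ 2) :
    G ≤ 2 * μ * lam ∧ 0 ≤ lam * G := by
  have h0 := hq 0 le_rfl
  constructor
  · rcases le_or_gt G 0 with h | h
    · nlinarith
    · have h1 := hq (G / (2 * μ)) (by positivity)
      have h2 : G / (2 * μ) * G - μ * (G / (2 * μ)) ^ 2 = G ^ 2 / (4 * μ) := by
        field_simp; ring
      rw [h2] at h1
      have h3 : G ^ 2 ≤ (lam * G - μ * lam ^ 2) * (4 * μ) :=
        (div_le_iff₀ (by positivity)).mp h1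
      nlinarith [sq_nonneg (2 * μ * lam - G)]
  · nlinarith

lemma convex_fderiv_le {k : ℕ} {f : EuclideanSpace ℝ (Fin k) → ℝ}
    (hc : ConvexOn ℝ Set.univ f) (hd : Differentiable ℝ f)
    (x y : EuclideanSpace ℝ (Fin k)) :
    fderiv ℝ f x (y - x) ≤ f y - f x := by
  have hline : HasDerivAt (fun t : ℝ => x + t • (y - x)) (y - x) 0 := by
    simpa using ((hasDerivAt_id (0 : ℝ)).smul_const (y - x)).const_add x
  have h00 : x + (0 : ℝ) • (y - x) = x := by simp
  have hfd : HasFDerivAt f (fderiv ℝ f x) (x + (0 : ℝ) • (y - x)) := by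
    rw [h00]; exact (hd x).hasFDerivAt
  have hq0 : HasDerivAt (fun t : ℝ => f (x + t • (y - x))) (fderiv ℝ f x (y - x)) 0 :=
    hfd.comp_hasDerivAt 0 hline
  have hconv : ConvexOn ℝ Set.univ (fun t : ℝ => f (x + t • (y - x))) := by
    have h := hc.comp_affineMap (AffineMap.lineMap x y : ℝ →ᵃ[ℝ] EuclideanSpace ℝ (Fin k))
    have he : (f ∘ (AffineMap.lineMap x y : ℝ →ᵃ[ℝ] EuclideanSpace ℝ (Fin k)))
        = fun t : ℝ => f (x + t • (y - x)) := by
      funext t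
      simp [Function.comp, AffineMap.lineMap_apply, vsub_eq_sub, vadd_eq_add, add_comm]
    rw [he] at h
    simpa using h
  have hs := hconv.le_slope_of_hasDerivAt (Set.mem_univ (0 : ℝ)) (Set.mem_univ (1 : ℝ))
    one_pos hq0
  rw [slope_def_field] at hs
  simp only [one_smul, zero_smul, add_zero, sub_zero, div_one] at hs
  calc fderiv ℝ f x (y - x) ≤ f (x + (y - x)) - f x := by
        simpa using hs
    _ = f y - f x := by rw [add_sub_cancel]

lemma mem_simplex_comb {k : ℕ} {x z : EuclideanSpace ℝ (Fin k)}
    (hx : x ∈ simplex k) (hz : z ∈ simplex k) :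
    x + (1 / 2 : ℝ) • (z - x) ∈ simplex k := by
  obtain ⟨hx1, hx2⟩ := hx; obtain ⟨hz1, hz2⟩ := hz
  have happ : ∀ j, (x + (1 / 2 : ℝ) • (z - x)) j = x j + (1 / 2) * (z j - x j) := by
    intro j
    simp [PiLp.add_apply, PiLp.smul_apply, PiLp.sub_apply, smul_eq_mul]
  constructor
  · intro j
    rw [happ j]
    nlinarith [hx1 j, hz1 j]
  · rw [Finset.sum_congr rfl fun j _ => happ j, Finset.sum_add_distrib, ← Finset.mul_sum,
      Finset.sum_sub_distrib, hx2, hz2]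
    ring

lemma simplex_norm_sq_le {k : ℕ} {x z : EuclideanSpace ℝ (Fin k)}
    (hx : x ∈ simplex k) (hz : z ∈ simplex k) :
    ‖(1 / 2 : ℝ) • (z - x)‖ ^ 2 ≤ 1 / 2 := by
  obtain ⟨hx1, hx2⟩ := hx; obtain ⟨hz1, hz2⟩ := hz
  rw [PiLp.norm_sq_eq_of_L2]
  have happ : ∀ j, ‖((1 / 2 : ℝ) • (z - x)) j‖ ^ 2 = ((z j - x j) / 2) ^ 2 := by
    intro j
    have : ((1 / 2 : ℝ) • (z - x)) j = (z j - x j) / 2 := by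
      simp [PiLp.smul_apply, PiLp.sub_apply, smul_eq_mul]; ring
    rw [this, Real.norm_eq_abs, sq_abs]
  rw [Finset.sum_congr rfl fun j _ => happ j]
  have hxz : ∀ j, ((z j - x j) / 2) ^ 2 ≤ (z j ^ 2 + x j ^ 2) / 4 := by
    intro j
    nlinarith [mul_nonneg (hz1 j) (hx1 j)]
  calc ∑ j, ((z j - x j) / 2) ^ 2 ≤ ∑ j, (z j ^ 2 + x j ^ 2) / 4 :=
        Finset.sum_le_sum fun j _ => hxz j
    _ = (∑ j, z j ^ 2 + ∑ j, x j ^ 2) / 4 := by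
        rw [← Finset.sum_add_distrib, Finset.sum_div]
    _ ≤ (∑ j, z j + ∑ j, x j) / 4 := by
        have hzb : ∀ j, z j ^ 2 ≤ z j := fun j => by
          nlinarith [hz1 j, Finset.single_le_sum (fun j _ => hz1 j) (Finset.mem_univ j), hz2]
        have hxb : ∀ j, x j ^ 2 ≤ x j := fun j => by
          nlinarith [hx1 j, Finset.single_le_sum (fun j _ => hx1 j) (Finset.mem_univ j), hx2]
        have := Finset.sum_le_sum fun j (_ : j ∈ Finset.univ) => hzb j
        have := Finset.sum_le_sum fun j (_ : j ∈ Finset.univ) => hxb j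
        linarith
    _ = 1 / 2 := by rw [hz2, hx2]; norm_num

lemma pot_update_eq (n : ℕ) (A : Fin n → ℕ) (φ : (∀ i, Fin (A i)) → ℝ)
    (x : Strat n A) (i : Fin n) (v : EuclideanSpace ℝ (Fin (A i))) :
    pot n A φ (WithLp.toLp 2 (Function.update x i v))
      = ∑ a : ∀ j, Fin (A j), φ a * (v (a i) * ∏ j ∈ Finset.univ.erase i, x j (a j)) := by
  unfold pot
  refine Finset.sum_congr rfl fun a _ => ?_
  congr 1
  have he : (fun j => Function.update x i v j (a j))
      = Function.update (fun j => x j (a j)) i (v (a i)) := by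
    funext j
    rcases eq_or_ne j i with rfl | h
    · simp
    · simp [Function.update_of_ne h]
  rw [he, Finset.prod_update_of_mem (Finset.mem_univ i), Finset.sdiff_singleton_eq_erase]

lemma pot_self_eq (n : ℕ) (A : Fin n → ℕ) (φ : (∀ i, Fin (A i)) → ℝ)
    (x : Strat n A) (i : Fin n) :
    pot n A φ x
      = ∑ a : ∀ j, Fin (A j), φ a * (x i (a i) * ∏ j ∈ Finset.univ.erase i, x j (a j)) := by
  unfold pot
  exact Finset.sum_congr rfl fun a _ => by
    rw [← Finset.mul_prod_erase Finset.univ (fun j => x j (a j)) (Finset.mem_univ i)]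

lemma pot_bound {n : ℕ} {A : Fin n → ℕ} {φ : (∀ i, Fin (A i)) → ℝ} {Φmax : ℝ}
    (hφ : ∀ a, |φ a| ≤ Φmax) {x : Strat n A} (hx : x ∈ prodSimplex n A) :
    |pot n A φ x| ≤ |Φmax| := by
  unfold pot
  have h1 : ∀ a : ∀ j, Fin (A j), 0 ≤ ∏ j, x j (a j) :=
    fun a => Finset.prod_nonneg fun j _ => (hx j).1 (a j)
  calc |∑ a : ∀ j, Fin (A j), φ a * ∏ j, x j (a j)|
      ≤ ∑ a : ∀ j, Fin (A j), |φ a * ∏ j, x j (a j)| := Finset.abs_sum_le_sum_abs _ _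
    _ ≤ ∑ a : ∀ j, Fin (A j), |Φmax| * ∏ j, x j (a j) := by
        refine Finset.sum_le_sum fun a _ => ?_
        rw [abs_mul, abs_of_nonneg (h1 a)]
        exact mul_le_mul_of_nonneg_right ((hφ a).trans (le_abs_self _)) (h1 a)
    _ = |Φmax| * ∑ a : ∀ j, Fin (A j), ∏ j, x j (a j) := by rw [Finset.mul_sum]
    _ = |Φmax| := by
        rw [← Fintype.prod_sum]
        have : ∀ j, ∑ aj, x j aj = 1 := fun j => (hx j).2
        simp [this]

lemma pot_diff (n : ℕ) (A : Fin n → ℕ) (φ : (∀ i, Fin (A i)) → ℝ) :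
    Differentiable ℝ (pot n A φ) := by
  unfold pot
  have hcoord : ∀ (j : Fin n) (b : Fin (A j)), Differentiable ℝ (fun y : Strat n A => y j b) := by
    intro j b
    have h1 : Differentiable ℝ (fun y : Strat n A => y j) :=
      (PiLp.proj (𝕜 := ℝ) (p := 2) (β := fun i => EuclideanSpace ℝ (Fin (A i))) j).differentiable
    have h2 : Differentiable ℝ (fun w : EuclideanSpace ℝ (Fin (A j)) => w b) :=
      (PiLp.proj (𝕜 := ℝ) (p := 2) (β := fun _ : Fin (A j) => ℝ) b).differentiable
    exact h2.comp h1
  refine Differentiable.fun_sum fun a _ => Differentiable.const_mul ?_ _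
  intro y
  exact (HasFDerivAt.finset_prod (u := Finset.univ)
    (g := fun j (x : Strat n A) => x j (a j))
    (g' := fun j => fderiv ℝ (fun x : Strat n A => x j (a j)) y)
    (fun j _ => ((hcoord j (a j)) y).hasFDerivAt)).differentiableAt

lemma add_smul_update_zero {n : ℕ} {A : Fin n → ℕ} (xhat : Strat n A) (i : Fin n)
    (u : EuclideanSpace ℝ (Fin (A i))) (δ : Strat n A)
    (hδ : δ = WithLp.toLp 2 (Function.update (0 : Strat n A) i u)) (t : ℝ) :
    xhat + t • δ = WithLp.toLp 2 (Function.update xhat i (xhat i + t • u)) := by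
  ext j : 1
  rcases eq_or_ne j i with rfl | h
  · simp [hδ, PiLp.add_apply, PiLp.smul_apply]
  · simp [hδ, PiLp.add_apply, PiLp.smul_apply, Function.update_of_ne h]

lemma key_inner (n : ℕ) (A : Fin n → ℕ) (φ : (∀ i, Fin (A i)) → ℝ)
    (d : Fin n → ℕ) (g : ∀ i, Fin (d i) → EuclideanSpace ℝ (Fin (A i)) → ℝ)
    (lhat : ∀ i, Fin (d i) → ℝ) (C : ℝ)
    (hgd : ∀ i m, Differentiable ℝ (g i m))
    (xhat : Strat n A) (i : Fin n) (u : EuclideanSpace ℝ (Fin (A i)))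
    (δ : Strat n A) (hδ : δ = WithLp.toLp 2 (Function.update (0 : Strat n A) i u)) :
    ⟪δ, gradient (fun y : Strat n A =>
        pot n A φ y + (∑ j, ∑ m, lhat j m * g j m (y j)) - C) xhat⟫
      = (∑ a : ∀ j, Fin (A j), φ a * (u (a i) * ∏ j ∈ Finset.univ.erase i, xhat j (a j)))
        + ∑ m, lhat i m * (fderiv ℝ (g i m) (xhat i) u) := by
  classical
  set F : Strat n A → ℝ := fun y =>
    pot n A φ y + (∑ j, ∑ m, lhat j m * g j m (y j)) - C with hF
  set P : ℝ :=
    ∑ a : ∀ j, Fin (A j), φ a * (u (a i) * ∏ j ∈ Finset.univ.erase i, xhat j (a j)) with hP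
  have hcoorddiff : ∀ (j : Fin n), Differentiable ℝ (fun y : Strat n A => y j) :=
    fun j => (PiLp.proj (𝕜 := ℝ) (p := 2)
      (β := fun i => EuclideanSpace ℝ (Fin (A i))) j).differentiable
  have hFdiff : Differentiable ℝ F := by
    refine (Differentiable.add (pot_diff n A φ) ?_).sub (differentiable_const C)
    refine Differentiable.fun_sum fun j _ => Differentiable.fun_sum fun m _ => ?_
    exact ((hgd j m).comp (hcoorddiff j)).const_mul _
  have hgrad : HasGradientAt F (gradient F xhat) xhat := (hFdiff xhat).hasGradientAt
  -- derivative via the gradient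
  have hlineδ : HasDerivAt (fun t : ℝ => xhat + t • δ) δ 0 := by
    simpa using ((hasDerivAt_id (0 : ℝ)).smul_const δ).const_add xhat
  have h0δ : xhat + (0 : ℝ) • δ = xhat := by simp
  have hFd : HasFDerivAt F ((InnerProductSpace.toDual ℝ _) (gradient F xhat))
      (xhat + (0 : ℝ) • δ) := by
    rw [h0δ]; exact hgrad.hasFDerivAt
  have hF1 : HasDerivAt (fun t : ℝ => F (xhat + t • δ)) ⟪gradient F xhat, δ⟫ 0 := by
    have := hFd.comp_hasDerivAt 0 hlineδ
    simpa [Function.comp_def] using this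
  -- the explicit derivative
  set K : ℝ := ∑ j ∈ Finset.univ.erase i, ∑ m, lhat j m * g j m (xhat j) with hK
  have hfun : (fun t : ℝ => F (xhat + t • δ))
      = fun t : ℝ => (pot n A φ xhat + t * P)
          + ((∑ m, lhat i m * g i m (xhat i + t • u)) + K) - C := by
    funext t
    rw [hF]
    simp only
    rw [add_smul_update_zero xhat i u δ hδ t]
    have e1 : pot n A φ (WithLp.toLp 2 (Function.update xhat i (xhat i + t • u)))
        = pot n A φ xhat + t * P := by
      rw [pot_update_eq, pot_self_eq n A φ xhat i, hP, Finset.mul_sum,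
        ← Finset.sum_add_distrib]
      refine Finset.sum_congr rfl fun a _ => ?_
      have : (xhat i + t • u) (a i) = xhat i (a i) + t * u (a i) := by
        simp [PiLp.add_apply, PiLp.smul_apply, smul_eq_mul]
      rw [this]; ring
    have e2 : ∑ j, ∑ m, lhat j m * g j m (Function.update xhat i (xhat i + t • u) j)
        = (∑ m, lhat i m * g i m (xhat i + t • u)) + K := by
      exact aux_sum_update (fun j w => ∑ m, lhat j m * g j m w) xhat i (xhat i + t • u)
    rw [e1, e2]
  have hF2 : HasDerivAt (fun t : ℝ => F (xhat + t • δ))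
      (P + ∑ m, lhat i m * (fderiv ℝ (g i m) (xhat i) u)) 0 := by
    rw [hfun]
    refine HasDerivAt.sub_const C ?_
    refine HasDerivAt.add ?_ ?_
    · simpa using ((hasDerivAt_id (0 : ℝ)).mul_const P).const_add (pot n A φ xhat)
    · refine HasDerivAt.add_const K ?_
      refine HasDerivAt.fun_sum fun m _ => ?_
      have hl2 : HasDerivAt (fun t : ℝ => xhat i + t • u) u 0 := by
        simpa using ((hasDerivAt_id (0 : ℝ)).smul_const u).const_add (xhat i)
      have h0 : xhat i + (0 : ℝ) • u = xhat i := by simp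
      have hgf : HasFDerivAt (g i m) (fderiv ℝ (g i m) (xhat i)) (xhat i + (0 : ℝ) • u) := by
        rw [h0]; exact (hgd i m (xhat i)).hasFDerivAt
      exact (hgf.comp_hasDerivAt 0 hl2).const_mul (lhat i m)
  have huniq := hF1.unique hF2
  rw [real_inner_comm]
  exact huniq

/-- **Approximate stationarity of the regularized Lagrangian implies an approximately
feasible approximate Nash equilibrium.**  Under Slater's condition with margins
`ξ i m ≥ ξmin > 0`, there is a constant `c > 0` depending only on
`n, Amax, Φmax, Φmin, γ, d, Gmax, ξmin` such that: for every `ε ∈ (0,1]`, every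
`0 < μ ≤ ε`, every `x̂ ∈ Δ^n` and `λ̂ = argmax_{λ⪰0} L̃(x̂,λ)`, if
`−min{δᵀ∇ₓL̃(x̂,λ̂) : x̂+δ ∈ Δ^n, ‖δ‖≤1} ≤ ε`, then (a) `g_{i,m}(x̂_i) ≤ cε` for all `i, m`;
and (b) for every player `i` and every `ε`-approximately feasible deviation `x'_i ∈ Δ(A_i)`
(`g_{i,m}(x'_i) ≤ ε` for all `m`), `Φ(x'_i, x̂_{-i}) ≥ Φ(x̂) − cε`. -/
theorem approx_stationary_implies_approx_nash
    (n Amax Dtot : ℕ) (Φmax Φmin γ Gmax ξmin : ℝ) (hγ : 0 ≤ γ) (hξmin : 0 < ξmin) :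
    ∃ c > (0 : ℝ),
      ∀ (A : Fin n → ℕ) (φ : (∀ i, Fin (A i)) → ℝ)
        (d : Fin n → ℕ) (g : ∀ i, Fin (d i) → EuclideanSpace ℝ (Fin (A i)) → ℝ),
        (∀ a, |φ a| ≤ Φmax) → (∀ i, A i ≤ Amax) → (∑ i, d i) = Dtot →
        (∀ x ∈ prodSimplex n A, Φmin ≤ pot n A φ x) →
        (∀ i m, ConvexOn ℝ Set.univ (g i m)) →
        (∀ i m, Differentiable ℝ (g i m)) →
        (∀ i m, LipschitzWith γ.toNNReal (gradient (g i m))) →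
        (∀ i m, ∀ y ∈ simplex (A i), |g i m y| ≤ Gmax) →
        ∀ ξ : ∀ i, Fin (d i) → ℝ, (∀ i m, ξmin ≤ ξ i m) →
        (∀ i, ∃ xtil ∈ simplex (A i), ∀ m, g i m xtil ≤ -(ξ i m)) →
        ∀ ε : ℝ, 0 < ε → ε ≤ 1 → ∀ μ : ℝ, 0 < μ → μ ≤ ε →
        ∀ xhat ∈ prodSimplex n A, ∀ lhat : ∀ i, Fin (d i) → ℝ,
          (∀ i m, 0 ≤ lhat i m) →
          (∀ l : ∀ i, Fin (d i) → ℝ, (∀ i m, 0 ≤ l i m) →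
            (∑ i, ∑ m, l i m * g i m (xhat i)) - μ * ∑ i, ∑ m, (l i m) ^ 2 ≤
              (∑ i, ∑ m, lhat i m * g i m (xhat i)) - μ * ∑ i, ∑ m, (lhat i m) ^ 2) →
          (∀ δ : Strat n A, xhat + δ ∈ prodSimplex n A → ‖δ‖ ≤ 1 →
            -ε ≤ ⟪δ, gradient (fun y : Strat n A =>
              pot n A φ y + (∑ i, ∑ m, lhat i m * g i m (y i)) -
                μ * ∑ i, ∑ m, (lhat i m) ^ 2) xhat⟫) →
          (∀ i m, g i m (xhat i) ≤ c * ε) ∧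
          (∀ i, ∀ x' ∈ simplex (A i), (∀ m, g i m x' ≤ ε) →
            pot n A φ xhat - c * ε ≤ pot n A φ (WithLp.toLp 2 (Function.update xhat i x'))) := by
  classical
  set Λ : ℝ := (2 + 2 * |Φmax|) / ξmin with hΛdef
  have hΛpos : 0 < Λ := by
    rw [hΛdef]
    positivity
  refine ⟨2 * Λ + 2, by positivity, ?_⟩
  intro A φ d g hφ hA hD hmin hconv hgdiff hglip hgbd ξ hξ hslater ε hε hε1 μ hμ hμε
    xhat hxhat lhat hlh hopt hstat
  -- facts from the argmax property of `lhat`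
  have hfacts : ∀ i m, g i m (xhat i) ≤ 2 * μ * lhat i m ∧ 0 ≤ lhat i m * g i m (xhat i) := by
    intro i m
    refine quad_max hμ (hlh i m) ?_
    intro s hs
    have hpos : ∀ j m', 0 ≤ Function.update lhat i (Function.update (lhat i) m s) j m' := by
      intro j m'
      rcases eq_or_ne j i with rfl | hj
      · rw [Function.update_self]
        rcases eq_or_ne m' m with rfl | hm
        · rw [Function.update_self]; exact hs
        · rw [Function.update_of_ne hm]; exact hlh j m'
      · rw [Function.update_of_ne hj]; exact hlh j m'
    have h := hopt _ hpos
    have hU1 : ∑ j, ∑ m', Function.update lhat i (Function.update (lhat i) m s) j m'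
          * g j m' (xhat j)
        = (s * g i m (xhat i)
            + ∑ m' ∈ Finset.univ.erase m, lhat i m' * g i m' (xhat i))
          + ∑ j ∈ Finset.univ.erase i, ∑ m', lhat j m' * g j m' (xhat j) := by
      rw [aux_sum_update (fun j w => ∑ m', w m' * g j m' (xhat j)) lhat i
        (Function.update (lhat i) m s)]
      rw [aux_sum_update (fun m' (w : ℝ) => w * g i m' (xhat i)) (lhat i) m s]
    have hU2 : ∑ j, ∑ m', (Function.update lhat i (Function.update (lhat i) m s) j m') ^ 2
        = (s ^ 2 + ∑ m' ∈ Finset.univ.erase m, (lhat i m') ^ 2)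
          + ∑ j ∈ Finset.univ.erase i, ∑ m', (lhat j m') ^ 2 := by
      rw [aux_sum_update (fun j w => ∑ m', (w m') ^ 2) lhat i
        (Function.update (lhat i) m s)]
      rw [aux_sum_update (fun _ (w : ℝ) => w ^ 2) (lhat i) m s]
    have hL1 : ∑ j, ∑ m', lhat j m' * g j m' (xhat j)
        = (lhat i m * g i m (xhat i)
            + ∑ m' ∈ Finset.univ.erase m, lhat i m' * g i m' (xhat i))
          + ∑ j ∈ Finset.univ.erase i, ∑ m', lhat j m' * g j m' (xhat j) := by
      rw [aux_sum_split (fun j => ∑ m', lhat j m' * g j m' (xhat j)) i]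
      rw [aux_sum_split (fun m' => lhat i m' * g i m' (xhat i)) m]
    have hL2 : ∑ j, ∑ m', (lhat j m') ^ 2
        = ((lhat i m) ^ 2 + ∑ m' ∈ Finset.univ.erase m, (lhat i m') ^ 2)
          + ∑ j ∈ Finset.univ.erase i, ∑ m', (lhat j m') ^ 2 := by
      rw [aux_sum_split (fun j => ∑ m', (lhat j m') ^ 2) i]
      rw [aux_sum_split (fun m' => (lhat i m') ^ 2) m]
    rw [hU1, hU2, hL1, hL2] at h
    simp only [mul_add] at h
    linarith
  -- the main stationarity consequence
  have key : ∀ (i : Fin n) (z : EuclideanSpace ℝ (Fin (A i))), z ∈ simplex (A i) →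
      -(2 * ε) ≤ (pot n A φ (WithLp.toLp 2 (Function.update xhat i z)) - pot n A φ xhat)
        + ∑ m, lhat i m * (g i m z - g i m (xhat i)) := by
    intro i z hz
    set u : EuclideanSpace ℝ (Fin (A i)) := (1 / 2 : ℝ) • (z - xhat i) with hu
    set δ : Strat n A := WithLp.toLp 2 (Function.update (0 : Strat n A) i u) with hδ
    have hsum : xhat + δ = WithLp.toLp 2 (Function.update xhat i (xhat i + u)) := by
      have h := add_smul_update_zero xhat i u δ hδ 1
      simpa using h
    have hmem : xhat + δ ∈ prodSimplex n A := by
      rw [hsum]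
      intro j
      rcases eq_or_ne j i with rfl | hj
      · rw [WithLp.ofLp_toLp, Function.update_self, hu]
        exact mem_simplex_comb (hxhat j) hz
      · rw [WithLp.ofLp_toLp, Function.update_of_ne hj]
        exact hxhat j
    have hnorm : ‖δ‖ ≤ 1 := by
      have h2 : ‖δ‖ ^ 2 = ∑ j, ‖δ j‖ ^ 2 := PiLp.norm_sq_eq_of_L2 _ δ
      have h3 : ∑ j, ‖δ j‖ ^ 2 = ‖u‖ ^ 2 := by
        rw [aux_sum_split (fun j => ‖δ j‖ ^ 2) i]
        have hz0 : ∀ j ∈ Finset.univ.erase i, ‖δ j‖ ^ 2 = 0 := fun j hj => by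
          rw [hδ, WithLp.ofLp_toLp, Function.update_of_ne (Finset.ne_of_mem_erase hj)]
          simp
        rw [Finset.sum_eq_zero hz0, hδ, WithLp.ofLp_toLp, Function.update_self, add_zero]
      have h4 : ‖u‖ ^ 2 ≤ 1 / 2 := by
        rw [hu]; exact simplex_norm_sq_le (hxhat i) hz
      nlinarith [norm_nonneg δ]
    have hst := hstat δ hmem hnorm
    rw [key_inner n A φ d g lhat (μ * ∑ i, ∑ m, (lhat i m) ^ 2) hgdiff xhat i u δ hδ] at hst
    have hP2 : 2 * (∑ a : ∀ j, Fin (A j),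
          φ a * (u (a i) * ∏ j ∈ Finset.univ.erase i, xhat j (a j)))
        = pot n A φ (WithLp.toLp 2 (Function.update xhat i z)) - pot n A φ xhat := by
      rw [pot_update_eq, pot_self_eq n A φ xhat i, Finset.mul_sum, ← Finset.sum_sub_distrib]
      refine Finset.sum_congr rfl fun a _ => ?_
      have hua : u (a i) = (z (a i) - xhat i (a i)) / 2 := by
        rw [hu]
        simp [PiLp.smul_apply, PiLp.sub_apply, smul_eq_mul]
        ring
      rw [hua]; ring
    have hsum_le : ∑ m, lhat i m * fderiv ℝ (g i m) (xhat i) u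
        ≤ (1 / 2) * ∑ m, lhat i m * (g i m z - g i m (xhat i)) := by
      rw [Finset.mul_sum]
      refine Finset.sum_le_sum fun m _ => ?_
      have hfd : fderiv ℝ (g i m) (xhat i) u
          = (1 / 2) * fderiv ℝ (g i m) (xhat i) (z - xhat i) := by
        rw [hu, map_smul]; simp [smul_eq_mul]
      have hcv : fderiv ℝ (g i m) (xhat i) (z - xhat i) ≤ g i m z - g i m (xhat i) :=
        convex_fderiv_le (hconv i m) (hgdiff i m) (xhat i) z
      have hmul := mul_le_mul_of_nonneg_left hcv (hlh i m)
      rw [hfd]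
      nlinarith
    linarith [hst, hsum_le, hP2]
  -- bound on the sum of the multipliers
  have hΛbd : ∀ i : Fin n, ∑ m, lhat i m ≤ Λ := by
    intro i
    obtain ⟨xt, hxt, hxtle⟩ := hslater i
    have hk := key i xt hxt
    have hb1 : |pot n A φ xhat| ≤ |Φmax| := pot_bound hφ hxhat
    have hupd : WithLp.toLp 2 (Function.update xhat i xt) ∈ prodSimplex n A := by
      intro j
      rcases eq_or_ne j i with rfl | hj
      · rw [WithLp.ofLp_toLp, Function.update_self]; exact hxt
      · rw [WithLp.ofLp_toLp, Function.update_of_ne hj]; exact hxhat j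
    have hb2 : |pot n A φ (WithLp.toLp 2 (Function.update xhat i xt))| ≤ |Φmax| := pot_bound hφ hupd
    have hterm : ∑ m, lhat i m * (g i m xt - g i m (xhat i))
        ≤ -(ξmin * ∑ m, lhat i m) := by
      have hstep : ∑ m, lhat i m * (g i m xt - g i m (xhat i))
          ≤ ∑ m, -(ξmin * lhat i m) := by
        refine Finset.sum_le_sum fun m _ => ?_
        have h1 : g i m xt ≤ -ξmin := (hxtle m).trans (by linarith [hξ i m])
        have h2 := (hfacts i m).2
        have h3 := hlh i m
        nlinarith
      calc ∑ m, lhat i m * (g i m xt - g i m (xhat i))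
          ≤ ∑ m, -(ξmin * lhat i m) := hstep
        _ = -(ξmin * ∑ m, lhat i m) := by
            rw [Finset.sum_neg_distrib, ← Finset.mul_sum]
    have habs1 := abs_le.mp hb1
    have habs2 := abs_le.mp hb2
    rw [hΛdef, le_div_iff₀ hξmin, mul_comm]
    linarith [hk, hterm, habs1.1, habs1.2, habs2.1, habs2.2, hε1]
  constructor
  · intro i m
    have h1 := (hfacts i m).1
    have h2 : lhat i m ≤ ∑ m', lhat i m' :=
      Finset.single_le_sum (fun m' _ => hlh i m') (Finset.mem_univ m)
    have h3 := hΛbd i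
    have hμ0 : (0 : ℝ) ≤ μ := hμ.le
    nlinarith [mul_le_mul_of_nonneg_left (h2.trans h3) hμ0,
      mul_le_mul_of_nonneg_right hμε hΛpos.le, hε, hΛpos]
  · intro i x' hx' hfeas
    have hk := key i x' hx'
    have hterm : ∑ m, lhat i m * (g i m x' - g i m (xhat i)) ≤ ε * ∑ m, lhat i m := by
      rw [Finset.mul_sum]
      refine Finset.sum_le_sum fun m _ => ?_
      have h2 := (hfacts i m).2
      have h4 := hfeas m
      have h3 := hlh i m
      nlinarith
    have h3 := hΛbd i
    have h5 := mul_le_mul_of_nonneg_left h3 hε.le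
    nlinarith [hk, hterm, h5, hΛpos, hε]
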